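/- For any θ ∈ ℝ with 0 < |θ| ≤ z*, where z* = argmax_{z≥0} μ'(z)z², the function x ↦ μ'(xθ)x² on [-1,1] is maximized at x = 1 (and x = -1), with maximum value μ'(θ). -/

import Mathlib

noncomputable def μ (z : ℝ) : ℝ := 1 / (1 + Real.exp (-z))

noncomputable def f (z : ℝ) : ℝ := deriv μ z * z ^ 2

open Real

lemma one_add_exp_pos (z : ℝ) : 0 < 1 + Real.exp (-z) := by positivity

lemma mu_hasDerivAt (z : ℝ) :
    HasDerivAt μ (Real.exp (-z) / (1 + Real.exp (-z)) ^ 2) z := by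
  have he : HasDerivAt (fun z : ℝ => Real.exp (-z)) (-Real.exp (-z)) z := by
    simpa [Function.comp_def] using ((Real.hasDerivAt_exp (-z)).comp z (hasDerivAt_neg z))
  have h : HasDerivAt (fun z : ℝ => 1 + Real.exp (-z)) (-Real.exp (-z)) z :=
    he.const_add 1
  have hne : 1 + Real.exp (-z) ≠ 0 := (one_add_exp_pos z).ne'
  have := h.inv hne
  have heq : μ = fun z : ℝ => (1 + Real.exp (-z))⁻¹ := by
    funext t; simp [μ, one_div]
  rw [heq]
  refine this.congr_deriv ?_
  ring

lemma deriv_mu (z : ℝ) : deriv μ z = Real.exp (-z) / (1 + Real.exp (-z)) ^ 2 :=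
  (mu_hasDerivAt z).deriv

lemma deriv_mu_pos (z : ℝ) : 0 < deriv μ z := by
  rw [deriv_mu]; positivity

lemma deriv_mu_even (z : ℝ) : deriv μ (-z) = deriv μ z := by
  rw [deriv_mu, deriv_mu]
  have h1 : (0:ℝ) < Real.exp (-z) := Real.exp_pos _
  have h2 : (0:ℝ) < Real.exp z := Real.exp_pos _
  have hmul : Real.exp z * Real.exp (-z) = 1 := by
    rw [← Real.exp_add]; simp
  rw [neg_neg, div_eq_div_iff (by positivity) (by positivity)]
  nlinarith [sq_nonneg (Real.exp z - Real.exp (-z))]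

noncomputable def pfun (z : ℝ) : ℝ := z * (1 - Real.exp (-z)) / (1 + Real.exp (-z))

lemma tfun_lt {a b : ℝ} (hab : a < b) :
    (1 - Real.exp (-a)) / (1 + Real.exp (-a)) < (1 - Real.exp (-b)) / (1 + Real.exp (-b)) := by
  have ha : (0:ℝ) < Real.exp (-a) := Real.exp_pos _
  have hb : (0:ℝ) < Real.exp (-b) := Real.exp_pos _
  have hlt : Real.exp (-b) < Real.exp (-a) := Real.exp_lt_exp.2 (by linarith)
  rw [div_lt_div_iff₀ (by positivity) (by positivity)]
  nlinarith

lemma tfun_nonneg {a : ℝ} (ha : 0 ≤ a) : 0 ≤ (1 - Real.exp (-a)) / (1 + Real.exp (-a)) := by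
  have : Real.exp (-a) ≤ 1 := Real.exp_le_one_iff.2 (by linarith)
  have := one_add_exp_pos a
  apply div_nonneg <;> linarith

lemma pfun_strictMono : StrictMonoOn pfun (Set.Ici 0) := by
  intro a ha b hb hab
  simp only [Set.mem_Ici] at ha hb
  unfold pfun
  rw [mul_div_assoc, mul_div_assoc]
  rcases eq_or_lt_of_le ha with h0 | h0
  · rw [← h0]
    simp only [zero_mul]
    have hbpos : 0 < b := lt_of_le_of_lt ha hab
    have : (0:ℝ) < (1 - Real.exp (-b)) / (1 + Real.exp (-b)) := by
      have : Real.exp (-b) < 1 := Real.exp_lt_one_iff.2 (by linarith)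
      apply div_pos <;> [linarith; linarith [one_add_exp_pos b]]
    positivity
  · calc a * ((1 - Real.exp (-a)) / (1 + Real.exp (-a)))
        < a * ((1 - Real.exp (-b)) / (1 + Real.exp (-b))) := by
          exact mul_lt_mul_of_pos_left (tfun_lt hab) h0
      _ ≤ b * ((1 - Real.exp (-b)) / (1 + Real.exp (-b))) := by
          apply mul_le_mul_of_nonneg_right (le_of_lt hab)
          exact tfun_nonneg (le_trans ha (le_of_lt hab))

lemma pfun_continuous : Continuous pfun := by
  unfold pfun
  apply Continuous.div
  · continuity
  · continuity
  · intro z; exact (one_add_exp_pos z).ne'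

lemma f_hasDerivAt (z : ℝ) :
    HasDerivAt f (Real.exp (-z) * z * (2 - pfun z) / (1 + Real.exp (-z)) ^ 2) z := by
  have heq : f = fun z : ℝ => Real.exp (-z) / (1 + Real.exp (-z)) ^ 2 * z ^ 2 := by
    funext t; rw [f, deriv_mu]
  rw [heq]
  have he : HasDerivAt (fun z : ℝ => Real.exp (-z)) (-Real.exp (-z)) z := by
    simpa [Function.comp_def] using ((Real.hasDerivAt_exp (-z)).comp z (hasDerivAt_neg z))
  have hd : HasDerivAt (fun z : ℝ => (1 + Real.exp (-z)) ^ 2)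
      (2 * (1 + Real.exp (-z)) ^ 1 * (-Real.exp (-z))) z := (he.const_add 1).pow 2
  have hne : (1 + Real.exp (-z)) ^ 2 ≠ 0 := by positivity
  have hF := he.div hd hne
  have hz : HasDerivAt (fun x : ℝ => x ^ 2) (2 * z) z := by
    simpa using hasDerivAt_pow 2 z
  have := hF.mul hz
  refine this.congr_deriv ?_
  have hne' : 1 + Real.exp (-z) ≠ 0 := (one_add_exp_pos z).ne'
  unfold pfun
  simp only [Pi.div_apply]
  field_simp
  ring

lemma f_continuous : Continuous f := by
  have heq : f = fun z : ℝ => Real.exp (-z) / (1 + Real.exp (-z)) ^ 2 * z ^ 2 := by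
    funext t; rw [f, deriv_mu]
  rw [heq]
  apply Continuous.mul _ (by continuity)
  apply Continuous.div (by continuity) (by continuity)
  intro z; positivity

lemma exp_three_gt_five : (5 : ℝ) < Real.exp 3 := by
  have h1 : (2.7 : ℝ) < Real.exp 1 := by
    have := Real.exp_one_gt_d9
    linarith
  have h3 : Real.exp 3 = Real.exp 1 ^ 3 := by
    rw [← Real.exp_nat_mul]; norm_num
  rw [h3]
  have h2 : (2.7:ℝ)^3 < Real.exp 1 ^ 3 := by
    apply pow_lt_pow_left₀ h1 (by norm_num)
    norm_num
  nlinarith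

lemma exists_z0 : ∃ z0 ∈ Set.Icc (0:ℝ) 3, pfun z0 = 2 := by
  have hcont : ContinuousOn pfun (Set.Icc 0 3) := pfun_continuous.continuousOn
  have h0 : pfun 0 = 0 := by simp [pfun]
  have h3 : 2 < pfun 3 := by
    unfold pfun
    have he : Real.exp (-3 : ℝ) < 1/5 := by
      rw [Real.exp_neg]
      rw [inv_lt_comm₀ (Real.exp_pos 3) (by norm_num)]
      have := exp_three_gt_five
      linarith
    have hp := one_add_exp_pos 3
    rw [lt_div_iff₀ hp]
    have : (0:ℝ) < Real.exp (-3:ℝ) := Real.exp_pos _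
    nlinarith
  have := intermediate_value_Icc (by norm_num : (0:ℝ) ≤ 3) hcont
  have hmem : (2:ℝ) ∈ Set.Icc (pfun 0) (pfun 3) := by
    constructor
    · rw [h0]; norm_num
    · linarith
  obtain ⟨z0, hz0, hval⟩ := this hmem
  exact ⟨z0, hz0, hval⟩

lemma f_strictMonoOn {z0 : ℝ} (hz0 : pfun z0 = 2) (hz0pos : 0 < z0) :
    StrictMonoOn f (Set.Icc 0 z0) := by
  apply strictMonoOn_of_deriv_pos (convex_Icc 0 z0) f_continuous.continuousOn
  intro x hx
  rw [interior_Icc] at hx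
  rw [(f_hasDerivAt x).deriv]
  have hp : pfun x < 2 := by
    rw [← hz0]
    exact pfun_strictMono (Set.mem_Ici.2 (le_of_lt hx.1)) (Set.mem_Ici.2 (le_of_lt hz0pos)) hx.2
  have := Real.exp_pos (-x)
  have h1 := hx.1
  have h2 : (0:ℝ) < 2 - pfun x := by linarith
  positivity

lemma f_strictAntiOn {z0 : ℝ} (hz0 : pfun z0 = 2) (hz0pos : 0 < z0) :
    StrictAntiOn f (Set.Ici z0) := by
  apply strictAntiOn_of_deriv_neg (convex_Ici z0) f_continuous.continuousOn
  intro x hx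
  rw [interior_Ici] at hx
  rw [(f_hasDerivAt x).deriv]
  have hp : 2 < pfun x := by
    rw [← hz0]
    exact pfun_strictMono (Set.mem_Ici.2 (le_of_lt hz0pos))
      (Set.mem_Ici.2 (le_of_lt (lt_trans hz0pos hx))) hx
  have he := Real.exp_pos (-x)
  have hxpos : 0 < x := lt_trans hz0pos hx
  have hd : (0:ℝ) < (1 + Real.exp (-x)) ^ 2 := by positivity
  apply div_neg_of_neg_of_pos _ hd
  have := mul_neg_of_pos_of_neg (mul_pos he hxpos) (show 2 - pfun x < 0 by linarith)
  linarith

lemma f_eq (z : ℝ) : f z = deriv μ z * z ^ 2 := rfl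

lemma deriv_mu_abs (z : ℝ) : deriv μ |z| = deriv μ z := by
  rcases abs_cases z with ⟨h, _⟩ | ⟨h, _⟩
  · rw [h]
  · rw [h, deriv_mu_even]

theorem one_dim_H_optimal_design_small_theta (θ zstar : ℝ)
    (hzpos : 0 ≤ zstar) (hmax : ∀ z ∈ Set.Ici (0 : ℝ), f z ≤ f zstar)
    (hθpos : 0 < |θ|) (hθle : |θ| ≤ zstar) :
    (∀ x ∈ Set.Icc (-1 : ℝ) 1, deriv μ (x * θ) * x ^ 2 ≤ deriv μ θ) ∧
    deriv μ ((1 : ℝ) * θ) * (1 : ℝ) ^ 2 = deriv μ θ ∧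
    deriv μ ((-1 : ℝ) * θ) * (-1 : ℝ) ^ 2 = deriv μ θ := by
  obtain ⟨z0, hz0mem, hz0⟩ := exists_z0
  have hz0pos : 0 < z0 := by
    rcases lt_or_eq_of_le hz0mem.1 with h | h
    · exact h
    · exfalso; rw [← h] at hz0; simp [pfun] at hz0
  have hzle : zstar ≤ z0 := by
    by_contra hcon
    push_neg at hcon
    have h1 : f zstar < f z0 :=
      f_strictAntiOn hz0 hz0pos (Set.mem_Ici.2 le_rfl) (Set.mem_Ici.2 (le_of_lt hcon)) hcon
    have h2 := hmax z0 (Set.mem_Ici.2 (le_of_lt hz0pos))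
    linarith
  have hθz0 : |θ| ≤ z0 := le_trans hθle hzle
  have hθsq : (0:ℝ) < θ ^ 2 := by
    have : θ ≠ 0 := by intro h; rw [h] at hθpos; simp at hθpos
    positivity
  have hmono := (f_strictMonoOn hz0 hz0pos).monotoneOn
  refine ⟨?_, by ring_nf, ?_⟩
  · intro x hx
    have habs : |x * θ| ≤ |θ| := by
      have hax : |x| ≤ 1 := abs_le.2 ⟨hx.1, hx.2⟩
      rw [abs_mul]
      nlinarith [abs_nonneg x, hθpos]
    have hkey : f |x * θ| ≤ f |θ| :=
      hmono ⟨abs_nonneg _, le_trans habs hθz0⟩ ⟨abs_nonneg _, hθz0⟩ habs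
    rw [f_eq, f_eq, deriv_mu_abs, deriv_mu_abs, sq_abs, sq_abs] at hkey
    have hxθ : (x * θ) ^ 2 = x ^ 2 * θ ^ 2 := by ring
    rw [hxθ, ← mul_assoc] at hkey
    exact le_of_mul_le_mul_right hkey hθsq
  · have h : deriv μ (-θ) = deriv μ θ := deriv_mu_even θ
    rw [neg_one_mul, h]
    ring
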